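/- Let μ, ν be distributions on a finite set 𝒳, D : 𝒳 → [0,1] with E_{x←μ}D(x) − E_{x←ν}D(x) ≥ ε, where ν maximizes E D over all distributions with min-entropy at least k, i.e. ν is uniform on a set Max^k_D of 2^k points where D is largest. Then there exists t ∈ [0,1) such that the boolean function D''(x) = 1_{D(x) > t} satisfies E_{x←μ}D''(x) − max_{Y : H∞(Y) ≥ k} E_{x←Y}D''(x) ≥ ε. -/

import Mathlib

open scoped Classical
open Finset MeasureTheory


lemma stmt16_aux_int (a : ℝ) (h0 : 0 ≤ a) (h1 : a ≤ 1) :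
    ∫ t in Set.Ioo (0:ℝ) 1, (if t < a then (1:ℝ) else 0) = a := by
  have heq : (fun t : ℝ => if t < a then (1:ℝ) else 0)
      = Set.indicator (Set.Iio a) (fun _ => (1:ℝ)) := by
    funext t; by_cases h : t < a <;> simp [Set.indicator, h]
  rw [heq, setIntegral_indicator measurableSet_Iio]
  have hset : Set.Ioo (0:ℝ) 1 ∩ Set.Iio a = Set.Ioo 0 a := by
    ext t
    constructor
    · rintro ⟨⟨ht1, ht2⟩, ht3⟩; exact ⟨ht1, ht3⟩
    · rintro ⟨ht1, ht2⟩; exact ⟨⟨ht1, lt_of_lt_of_le ht2 h1⟩, ht2⟩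
  rw [hset, setIntegral_const, smul_eq_mul, mul_one, Real.volume_real_Ioo_of_le h0,
    sub_zero]

/-- From a real-valued distinguisher with advantage `ε` against the optimal flat
min-entropy-`k` distribution, some threshold yields a boolean distinguisher with
advantage `ε` against *all* min-entropy-`k` distributions. -/
theorem stmt16 {α : Type*} [Fintype α]
    (μ : α → ℝ) (hμ0 : ∀ x, 0 ≤ μ x) (hμ1 : ∑ x, μ x = 1)
    (D : α → ℝ) (hD : ∀ x, D x ∈ Set.Icc (0:ℝ) 1)
    (k : ℕ) (hk : 2 ^ k ≤ Fintype.card α)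
    (S : Finset α) (hScard : S.card = 2 ^ k)
    (hStop : ∀ x ∈ S, ∀ x' ∉ S, D x' ≤ D x)
    (ε : ℝ) (hε : 0 < ε)
    (hadv : ε ≤ (∑ x, μ x * D x) - ∑ x ∈ S, ((2:ℝ) ^ k)⁻¹ * D x) :
    ∃ t : ℝ, 0 ≤ t ∧ t < 1 ∧
      ∀ Y : α → ℝ, (∀ x, 0 ≤ Y x) → (∑ x, Y x = 1) →
        (∀ x, Y x ≤ ((2:ℝ) ^ k)⁻¹) →
        ε ≤ (∑ x ∈ Finset.univ.filter (fun x => t < D x), μ x) -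
            ∑ x ∈ Finset.univ.filter (fun x => t < D x), Y x := by
  classical
  set i : ℝ := ((2:ℝ)^k)⁻¹ with hi
  set c : α → ℝ := fun x => μ x - (if x ∈ S then i else 0) with hc
  set F : ℝ → ℝ := fun t => ∑ x, c x * (if t < D x then 1 else 0) with hF
  -- F t in terms of filtered sums
  have hFt : ∀ t : ℝ, F t = (∑ x ∈ Finset.univ.filter (fun x => t < D x), μ x)
      - ∑ x ∈ S.filter (fun x => t < D x), i := by
    intro t
    simp only [hF, hc, sub_mul, Finset.sum_sub_distrib, ite_mul, zero_mul]
    congr 1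
    · rw [Finset.sum_filter]
      exact Finset.sum_congr rfl fun x _ => by by_cases h : t < D x <;> simp [h]
    · rw [Finset.sum_ite_mem, Finset.univ_inter, Finset.sum_filter]
      exact Finset.sum_congr rfl fun x _ => by by_cases h : t < D x <;> simp [h]
  -- candidate thresholds
  set T0 : Finset ℝ := insert (0:ℝ) ((Finset.univ.image D).filter (fun v => v < 1)) with hT0
  have hT0mem : ∀ t' ∈ T0, 0 ≤ t' ∧ t' < 1 := by
    intro t' ht'
    rw [hT0, Finset.mem_insert] at ht'
    rcases ht' with h | h
    · simp [h]
    · rw [Finset.mem_filter, Finset.mem_image] at h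
      obtain ⟨⟨x, _, hx⟩, hlt⟩ := h
      exact ⟨hx ▸ (hD x).1, hlt⟩
  have hstep : ∀ t : ℝ, 0 ≤ t → t < 1 → ∃ t' ∈ T0, ∀ x, (t < D x ↔ t' < D x) := by
    intro t ht0 ht1
    have hne : (T0.filter (· ≤ t)).Nonempty :=
      ⟨0, Finset.mem_filter.2 ⟨Finset.mem_insert_self _ _, ht0⟩⟩
    set t' := (T0.filter (· ≤ t)).max' hne with ht'
    have ht'mem := (T0.filter (· ≤ t)).max'_mem hne
    rw [Finset.mem_filter] at ht'mem
    refine ⟨t', ht'mem.1, fun x => ⟨fun h => lt_of_le_of_lt ht'mem.2 h, fun h => ?_⟩⟩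
    by_contra hcon
    push_neg at hcon
    have hDx : D x ∈ T0.filter (· ≤ t) := by
      rw [Finset.mem_filter]
      refine ⟨?_, hcon⟩
      rw [hT0, Finset.mem_insert]
      right
      rw [Finset.mem_filter, Finset.mem_image]
      exact ⟨⟨x, Finset.mem_univ x, rfl⟩, lt_of_le_of_lt hcon ht1⟩
    exact absurd (Finset.le_max' _ _ hDx) (not_le.2 h)
  -- maximizer over T0
  obtain ⟨ts, htsT0, htsmax⟩ := Finset.exists_max_image T0 F ⟨0, Finset.mem_insert_self _ _⟩
  obtain ⟨hts0, hts1⟩ := hT0mem ts htsT0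
  -- F t ≤ F ts on (0,1)
  have hFle : ∀ t ∈ Set.Ioo (0:ℝ) 1, F t ≤ F ts := by
    rintro t ⟨ht0, ht1⟩
    obtain ⟨t', ht'T0, hiff⟩ := hstep t (le_of_lt ht0) ht1
    have : F t = F t' := by
      rw [hF]
      exact Finset.sum_congr rfl fun x _ => by rw [hc]; simp [hiff x]
    rw [this]
    exact htsmax t' ht'T0
  -- integrability
  have hvol : (volume (Set.Ioo (0:ℝ) 1)) < ⊤ := by
    rw [Real.volume_Ioo]; exact ENNReal.ofReal_lt_top
  have hintx : ∀ x : α, MeasureTheory.IntegrableOn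
      (fun t => if t < D x then (1:ℝ) else 0) (Set.Ioo 0 1) volume := by
    intro x
    have heq : (fun t : ℝ => if t < D x then (1:ℝ) else 0)
        = Set.indicator (Set.Iio (D x)) (fun _ => (1:ℝ)) := by
      funext t; by_cases h : t < D x <;> simp [Set.indicator, h]
    rw [heq]
    exact (MeasureTheory.integrableOn_const hvol.ne).indicator measurableSet_Iio
  have hFint : MeasureTheory.IntegrableOn F (Set.Ioo 0 1) volume := by
    rw [hF]
    exact MeasureTheory.integrable_finset_sum _ fun x _ => (hintx x).const_mul (c x)
  -- integral of F equals the real advantage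
  have hFint_eq : ∫ t in Set.Ioo (0:ℝ) 1, F t = ∑ x, c x * D x := by
    rw [hF, MeasureTheory.integral_finset_sum _ fun x _ => (hintx x).const_mul (c x)]
    refine Finset.sum_congr rfl fun x _ => ?_
    rw [integral_const_mul, stmt16_aux_int (D x) (hD x).1 (hD x).2]
  have hcsum : ∑ x, c x * D x = (∑ x, μ x * D x) - ∑ x ∈ S, i * D x := by
    simp only [hc, sub_mul, Finset.sum_sub_distrib, ite_mul, zero_mul]
    congr 1
    rw [Finset.sum_ite_mem, Finset.univ_inter]
  -- ε ≤ F ts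
  have hεF : ε ≤ F ts := by
    have h1 : ε ≤ ∫ t in Set.Ioo (0:ℝ) 1, F t := by
      rw [hFint_eq, hcsum]; exact hadv
    have h2 : ∫ t in Set.Ioo (0:ℝ) 1, F t ≤ ∫ _ in Set.Ioo (0:ℝ) 1, F ts :=
      MeasureTheory.setIntegral_mono_on hFint
        (MeasureTheory.integrableOn_const hvol.ne) measurableSet_Ioo hFle
    have h3 : ∫ _ in Set.Ioo (0:ℝ) 1, F ts = F ts := by
      rw [MeasureTheory.setIntegral_const, Real.volume_real_Ioo, smul_eq_mul]
      norm_num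
    linarith
  -- conclusion
  refine ⟨ts, hts0, hts1, fun Y hY0 hY1 hYk => ?_⟩
  have hkey : ∑ x ∈ Finset.univ.filter (fun x => ts < D x), Y x
      ≤ ∑ x ∈ S.filter (fun x => ts < D x), i := by
    by_cases hsub : Finset.univ.filter (fun x => ts < D x) ⊆ S
    · have heq : S.filter (fun x => ts < D x)
          = Finset.univ.filter (fun x => ts < D x) := by
        ext x
        simp only [Finset.mem_filter, Finset.mem_univ, true_and]
        exact ⟨fun h => h.2, fun h =>
          ⟨hsub (Finset.mem_filter.2 ⟨Finset.mem_univ x, h⟩), h⟩⟩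
      rw [heq]
      exact Finset.sum_le_sum fun x _ => hYk x
    · rw [Finset.not_subset] at hsub
      obtain ⟨x0, hx0mem, hx0S⟩ := hsub
      rw [Finset.mem_filter] at hx0mem
      have hall : ∀ x ∈ S, ts < D x := fun x hx =>
        lt_of_lt_of_le hx0mem.2 (hStop x hx x0 hx0S)
      rw [Finset.filter_true_of_mem hall, Finset.sum_const, hScard, nsmul_eq_mul]
      have h2k : ((2:ℝ)^k) ≠ 0 := by positivity
      have : ((2:ℝ)^k) * i = 1 := by rw [hi]; field_simp
      calc ∑ x ∈ Finset.univ.filter (fun x => ts < D x), Y x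
          ≤ ∑ x, Y x := Finset.sum_le_sum_of_subset_of_nonneg
            (Finset.subset_univ _) (fun x _ _ => hY0 x)
        _ = 1 := hY1
        _ = (2^k : ℕ) * i := by push_cast; rw [this]
  have := hFt ts
  linarith [hεF, hkey, this.symm ▸ hεF]
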